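/- Let X be a complex Banach space. For each N ≥ 1 let f_1^N, …, f_N^N ∈ X, and let (A_N)_{N≥1} be a nondecreasing sequence of reals with A_N ≥ 1 such that for every N and all complex scalars α_1, …, α_N one has Σ_{j=1}^N |α_j| ≤ A_N·‖Σ_{j=1}^N α_j f_j^N‖. Assume that for every N ≥ 2 and every j ∈ {1, …, N−1} one has ‖f_j^N − f_j^{N−1}‖ ≤ 2^{−(N+2)}/A_{N−1}. Then: (a) for every j ≥ 1 the limit f_j := lim_{N→∞} f_j^N exists in X; (b) if g ∈ X and there exist g_N ∈ span{f_j^N : 1 ≤ j ≤ N} with g_N → g in X, then g lies in the closed linear span of {f_j : j ≥ 1}. -/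

import Mathlib

open Filter Finset

/-- Convergence and completeness from the ℓ¹-basis-constant estimates: if the finite
families `f N 1, …, f N N` satisfy `∑ |α_j| ≤ A_N ‖∑ α_j f N j‖` and consecutive
generations are close, `‖f N j - f (N-1) j‖ ≤ 2^{-(N+2)}/A_{N-1}`, then (a) each sequence
`N ↦ f N j` converges to some `flim j`, and (b) any `g` which is a limit of vectors
`g_N ∈ span {f N j : 1 ≤ j ≤ N}` lies in the closed linear span of `{flim j : j ≥ 1}`. -/
theorem limit_family_complete
    {X : Type*} [NormedAddCommGroup X] [NormedSpace ℂ X] [CompleteSpace X]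
    (f : ℕ → ℕ → X) (A : ℕ → ℝ)
    (hA1 : ∀ N, 1 ≤ A N) (hAmono : Monotone A)
    (hBasis : ∀ N, 1 ≤ N → ∀ α : ℕ → ℂ,
      ∑ j ∈ Finset.Icc 1 N, ‖α j‖ ≤ A N * ‖∑ j ∈ Finset.Icc 1 N, α j • f N j‖)
    (hClose : ∀ N, 2 ≤ N → ∀ j, 1 ≤ j → j ≤ N - 1 →
      ‖f N j - f (N - 1) j‖ ≤ 1 / (2 ^ (N + 2) * A (N - 1))) :
    ∃ flim : ℕ → X,
      (∀ j, 1 ≤ j →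
        Filter.Tendsto (fun N => f N j) Filter.atTop (nhds (flim j))) ∧
      ∀ g : X,
        (∃ gN : ℕ → X,
          (∀ N, 1 ≤ N →
            gN N ∈ Submodule.span ℂ ((fun j => f N j) '' Set.Icc 1 N)) ∧
          Filter.Tendsto gN Filter.atTop (nhds g)) →
        g ∈ closure (Submodule.span ℂ (flim '' Set.Ici 1) : Set X) := by
  classical
  have hA0 : ∀ N, (0:ℝ) < A N := fun N => lt_of_lt_of_le one_pos (hA1 N)
  -- telescoping estimate
  have tele : ∀ j, 1 ≤ j → ∀ N, j ≤ N → ∀ M, N ≤ M →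
      ‖f M j - f N j‖ ≤ ((1:ℝ)/2^(N+2) - 1/2^(M+2)) / A N := by
    intro j hj N hjN M hNM
    induction M, hNM using Nat.le_induction with
    | base => simp
    | succ M hNM ih =>
      have h1 : ‖f (M+1) j - f M j‖ ≤ 1 / (2 ^ (M+3) * A M) := by
        have := hClose (M+1) (by omega) j hj (by omega)
        simpa using this
      have h2 : (1:ℝ) / (2 ^ (M+3) * A M) ≤ 1 / (2 ^ (M+3) * A N) := by
        apply one_div_le_one_div_of_le
        · have := hA0 M; have := hA0 N; positivity
        · have := hAmono hNM
          nlinarith [hA0 N, (by positivity : (0:ℝ) < (2:ℝ)^(M+3))]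
      have h3 : ‖f (M+1) j - f N j‖ ≤ ‖f (M+1) j - f M j‖ + ‖f M j - f N j‖ :=
        norm_sub_le_norm_sub_add_norm_sub _ _ _
      have hAN := hA0 N
      have hp2 : (0:ℝ) < (2:ℝ)^(M+2) := by positivity
      calc ‖f (M+1) j - f N j‖
          ≤ 1 / (2 ^ (M+3) * A N) + ((1:ℝ)/2^(N+2) - 1/2^(M+2)) / A N := by
            exact h3.trans (add_le_add (h1.trans h2) ih)
        _ = ((1:ℝ)/2^(N+2) - 1/2^(M+1+2)) / A N := by
            have h4 : (2:ℝ)^(M+3) = 2^(M+2) * 2 := by ring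
            field_simp
            ring
  have hb : ∀ j, 1 ≤ j → ∀ N, j ≤ N → ∀ M, N ≤ M →
      ‖f M j - f N j‖ ≤ 1/2^(N+2) / A N := by
    intro j hj N hjN M hNM
    refine (tele j hj N hjN M hNM).trans ?_
    have hAN := hA0 N
    have : (0:ℝ) ≤ 1/2^(M+2) := by positivity
    gcongr
    linarith
  have hcauchy : ∀ j, 1 ≤ j → ∃ L, Tendsto (fun N => f N j) atTop (nhds L) := by
    intro j hj
    have : CauchySeq (fun N => f N j) := by
      rw [Metric.cauchySeq_iff']
      intro ε hε
      obtain ⟨k, hk⟩ := exists_pow_lt_of_lt_one hε (by norm_num : (1:ℝ)/2 < 1)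
      refine ⟨max j k, fun n hn => ?_⟩
      set N := max j k
      have hjN : j ≤ N := le_max_left _ _
      have hkN : k ≤ N := le_max_right _ _
      have h1 : dist (f n j) (f N j) ≤ 1/2^(N+2) / A N := by
        rw [dist_eq_norm]; exact hb j hj N hjN n hn
      have h2 : (1:ℝ)/2^(N+2) / A N ≤ 1/2^(N+2) := by
        rw [div_le_iff₀ (hA0 N)]
        nlinarith [hA1 N, (by positivity : (0:ℝ) < (1:ℝ)/2^(N+2))]
      have h3 : (1:ℝ)/2^(N+2) ≤ ((1:ℝ)/2)^k := by
        rw [div_pow, one_pow]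
        apply div_le_div_of_nonneg_left (by norm_num) (by positivity)
        exact pow_le_pow_right₀ (by norm_num) (by omega)
      linarith
    exact cauchySeq_tendsto_of_complete this
  set flim : ℕ → X := fun j =>
    if h : ∃ L, Tendsto (fun N => f N j) atTop (nhds L) then h.choose else 0 with hflimdef
  have hflim : ∀ j, 1 ≤ j → Tendsto (fun N => f N j) atTop (nhds (flim j)) := by
    intro j hj
    have h := hcauchy j hj
    simp only [hflimdef, dif_pos h]
    exact h.choose_spec
  refine ⟨flim, hflim, ?_⟩
  rintro g ⟨gN, hgmem, hgtend⟩
  -- tail estimate on flim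
  have hfb : ∀ j N, 1 ≤ j → j ≤ N → ‖flim j - f N j‖ ≤ 1/2^(N+2) / A N := by
    intro j N hj hjN
    have h1 : Tendsto (fun M => ‖f M j - f N j‖) atTop (nhds ‖flim j - f N j‖) :=
      ((hflim j hj).sub tendsto_const_nhds).norm
    exact le_of_tendsto h1 (eventually_atTop.2 ⟨N, fun M hM => hb j hj N hjN M hM⟩)
  -- representation of elements of the span
  have hrep0 : ∀ N, ∀ x ∈ Submodule.span ℂ ((fun j => f N j) '' Set.Icc 1 N),
      ∃ α : ℕ → ℂ, x = ∑ j ∈ Finset.Icc 1 N, α j • f N j := by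
    intro N x hx
    induction hx using Submodule.span_induction with
    | mem x hx =>
      obtain ⟨t, ht, rfl⟩ := hx
      refine ⟨fun j => if j = t then 1 else 0, ?_⟩
      have htm : t ∈ Finset.Icc 1 N := by
        rw [Finset.mem_Icc]; exact ⟨ht.1, ht.2⟩
      simp [ite_smul, htm]
    | zero => exact ⟨0, by simp⟩
    | add x y _ _ hx hy =>
      obtain ⟨a, ha⟩ := hx
      obtain ⟨b, hbb⟩ := hy
      exact ⟨a + b, by simp [ha, hbb, add_smul, Finset.sum_add_distrib]⟩
    | smul c x _ hx =>
      obtain ⟨a, ha⟩ := hx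
      exact ⟨c • a, by simp [ha, smul_smul, Finset.smul_sum]⟩
  have hrep : ∀ N, ∃ α : ℕ → ℂ, 1 ≤ N →
      gN N = ∑ j ∈ Finset.Icc 1 N, α j • f N j := by
    intro N
    by_cases hN : 1 ≤ N
    · obtain ⟨α, hα⟩ := hrep0 N (gN N) (hgmem N hN)
      exact ⟨α, fun _ => hα⟩
    · exact ⟨0, fun h => absurd h hN⟩
  choose α hα using hrep
  set h : ℕ → X := fun N => ∑ j ∈ Finset.Icc 1 N, α N j • flim j with hhdef
  have hsum : ∀ N, 1 ≤ N → ∑ j ∈ Finset.Icc 1 N, ‖α N j‖ ≤ A N * ‖gN N‖ := by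
    intro N hN
    have := hBasis N hN (α N)
    rwa [← hα N hN] at this
  have hdist : ∀ N, 1 ≤ N → ‖h N - gN N‖ ≤ 1/2^(N+2) * ‖gN N‖ := by
    intro N hN
    have hAN := hA0 N
    calc ‖h N - gN N‖
        = ‖∑ j ∈ Finset.Icc 1 N, α N j • (flim j - f N j)‖ := by
          rw [hα N hN, hhdef]
          simp only [smul_sub, Finset.sum_sub_distrib]
      _ ≤ ∑ j ∈ Finset.Icc 1 N, ‖α N j • (flim j - f N j)‖ := norm_sum_le _ _
      _ ≤ ∑ j ∈ Finset.Icc 1 N, ‖α N j‖ * (1/2^(N+2) / A N) := by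
          refine Finset.sum_le_sum fun j hj => ?_
          rw [norm_smul]
          have hj' := Finset.mem_Icc.mp hj
          exact mul_le_mul_of_nonneg_left (hfb j N hj'.1 hj'.2) (norm_nonneg _)
      _ = (∑ j ∈ Finset.Icc 1 N, ‖α N j‖) * (1/2^(N+2) / A N) :=
          (Finset.sum_mul _ _ _).symm
      _ ≤ (A N * ‖gN N‖) * (1/2^(N+2) / A N) := by
          apply mul_le_mul_of_nonneg_right (hsum N hN)
          positivity
      _ = 1/2^(N+2) * ‖gN N‖ := by
          field_simp
  have hd0 : Tendsto (fun N => h N - gN N) atTop (nhds 0) := by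
    refine squeeze_zero_norm' (a := fun N => 1/2^(N+2) * ‖gN N‖) ?_ ?_
    · filter_upwards [eventually_ge_atTop 1] with N hN
      exact hdist N hN
    · have h1 : Tendsto (fun N : ℕ => (1:ℝ)/2^(N+2)) atTop (nhds 0) := by
        have := tendsto_pow_atTop_nhds_zero_of_lt_one
          (by norm_num : (0:ℝ) ≤ 1/2) (by norm_num : (1:ℝ)/2 < 1)
        have h2 := this.comp (tendsto_add_atTop_nat 2)
        convert h2 using 2 with N
        simp [div_pow]
      have := h1.mul hgtend.norm
      simpa using this
  have hh : Tendsto h atTop (nhds g) := by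
    have := hd0.add hgtend
    rw [zero_add] at this
    convert this using 2 with N
    abel
  apply mem_closure_of_tendsto hh
  apply Filter.Eventually.of_forall
  intro N
  apply Submodule.sum_mem
  intro j hj
  apply Submodule.smul_mem
  apply Submodule.subset_span
  exact ⟨j, (Finset.mem_Icc.mp hj).1, rfl⟩
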